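/- Let A = aI and B = bI be positive multiples of the d×d identity matrix (a,b > 0), p > 1, and F_p(ω) = |ω|^p on ℝ⁴ = ℝ²×ℝ². Then F_p is (A,B)-convex in ℝ⁴∖{0} if and only if |1 − 2/p| ≤ 2√(ab)/(a+b). -/

import Mathlib

open scoped ComplexConjugate

noncomputable def Ip (p : ℝ) {d : ℕ} (ξ : EuclideanSpace ℂ (Fin d)) : EuclideanSpace ℂ (Fin d) :=
  WithLp.toLp 2 (fun i => ξ i + ((1 - 2 / p : ℝ) : ℂ) * conj (ξ i))

noncomputable def mulVecE {d : ℕ} (A : Matrix (Fin d) (Fin d) ℂ)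
    (ξ : EuclideanSpace ℂ (Fin d)) : EuclideanSpace ℂ (Fin d) :=
  WithLp.toLp 2 (fun i => ∑ j, A i j * ξ j)

noncomputable def Delta (p : ℝ) {d : ℕ} (A : Matrix (Fin d) (Fin d) ℂ) : ℝ :=
  sInf { r : ℝ | ∃ ξ : EuclideanSpace ℂ (Fin d), ‖ξ‖ = 1 ∧
    r = (@inner ℂ _ _ (mulVecE A ξ) (Ip p ξ)).re }

/-- The real form `M(A) = [[Re A, −Im A],[Im A, Re A]]` of a complex matrix, as a function on
`(Fin 2 × Fin d) × (Fin 2 × Fin d)`; the first coordinate `0` indexes the "real" block and `1`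
the "imaginary" block. -/
noncomputable def realForm {d : ℕ} (A : Matrix (Fin d) (Fin d) ℂ) :
    (Fin 2 × Fin d) → (Fin 2 × Fin d) → ℝ := fun x y =>
  if x.1 = 0 then (if y.1 = 0 then (A x.2 y.2).re else -((A x.2 y.2).im))
  else (if y.1 = 0 then (A x.2 y.2).im else (A x.2 y.2).re)

/-- Entries of the Hessian matrix `D²Φ(ω)` of a function on a Euclidean space. -/
noncomputable def hessE {ι : Type*} [Fintype ι] [DecidableEq ι]
    (Φ : EuclideanSpace ℝ ι → ℝ) (ω : EuclideanSpace ℝ ι) (i j : ι) : ℝ :=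
  iteratedFDeriv ℝ 2 Φ ω ![EuclideanSpace.single i 1, EuclideanSpace.single j 1]

/-- Generalized Hessian quadratic form
`H^{(A₁,…,A_l)}_Φ[ω;X] = ⟨(M(A₁*)⊕⋯⊕M(A_l*))·((D²Φ)(ω)⊗I_{ℝ^d}) X, X⟩`. -/
noncomputable def genHess {l d : ℕ} (A : Fin l → Matrix (Fin d) (Fin d) ℂ)
    (Φ : EuclideanSpace ℝ (Fin l × Fin 2) → ℝ) (ω : EuclideanSpace ℝ (Fin l × Fin 2))
    (X : Fin l × Fin 2 × Fin d → ℝ) : ℝ :=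
  ∑ j, ∑ a, ∑ m, (∑ b, ∑ n, realForm (A j).conjTranspose (a, m) (b, n) *
      (∑ k, ∑ c, hessE Φ ω (j, b) (k, c) * X (k, c, n))) * X (j, a, m)

/-- Generalized Hessian quadratic form for a single matrix (functions on `ℝ²`):
`H^A_Φ[ζ;X] = ⟨M(A*)·((D²Φ)(ζ)⊗I_{ℝ^d}) X, X⟩`. -/
noncomputable def genHess1 {d : ℕ} (A : Matrix (Fin d) (Fin d) ℂ)
    (Φ : EuclideanSpace ℝ (Fin 2) → ℝ) (ζ : EuclideanSpace ℝ (Fin 2))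
    (X : Fin 2 × Fin d → ℝ) : ℝ :=
  ∑ a, ∑ m, (∑ b, ∑ n, realForm A.conjTranspose (a, m) (b, n) *
      (∑ c, hessE Φ ζ b c * X (c, n))) * X (a, m)

/-- The identification `V_d : ℂ^d → ℝ^{2d}`. -/
noncomputable def Vd {d : ℕ} (ξ : EuclideanSpace ℂ (Fin d)) : Fin 2 × Fin d → ℝ :=
  fun x => if x.1 = 0 then (ξ x.2).re else (ξ x.2).im


set_option maxHeartbeats 1000000

section Aux

namespace Stmt12Aux

variable {ι : Type*} [Fintype ι] [DecidableEq ι]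

noncomputable def inSL : (EuclideanSpace ℝ ι) →L[ℝ] (EuclideanSpace ℝ ι) →L[ℝ] ℝ := innerSL ℝ

@[simp] lemma inSL_apply (w v : EuclideanSpace ℝ ι) :
    inSL (ι := ι) w v = ∑ i, w i * v i := by
  have : inSL (ι := ι) w v = (inner ℝ w v : ℝ) := rfl
  rw [this, PiLp.inner_apply]
  simp [RCLike.inner_apply, mul_comm]

lemma pow_half_eq (q : ℝ) (w : EuclideanSpace ℝ ι) : ‖w‖ ^ q = (‖w‖ ^ 2) ^ (q / 2) := by
  rw [← Real.rpow_natCast ‖w‖ 2, ← Real.rpow_mul (norm_nonneg w)]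
  congr 1; push_cast; ring

lemma hasFDerivAt_c (p : ℝ) {w : EuclideanSpace ℝ ι} (hw : w ≠ 0) :
    HasFDerivAt (fun x : EuclideanSpace ℝ ι => p * ‖x‖ ^ (p - 2))
      ((p * (p - 2) * ‖w‖ ^ (p - 4)) • (inSL (ι := ι) w)) w := by
  have hn : (0:ℝ) < ‖w‖ := norm_pos_iff.2 hw
  have h1 : HasFDerivAt (fun x : EuclideanSpace ℝ ι => ‖x‖ ^ 2) (2 • (innerSL ℝ w)) w :=
    (hasStrictFDerivAt_norm_sq w).hasFDerivAt
  have h2 : HasDerivAt (fun t : ℝ => t ^ ((p-2) / 2))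
      ((p-2) / 2 * (‖w‖ ^ 2) ^ ((p-2) / 2 - 1)) (‖w‖ ^ 2) :=
    Real.hasDerivAt_rpow_const (Or.inl (by positivity))
  have h3 := (h2.comp_hasFDerivAt w h1).const_mul p
  have heq : (fun x : EuclideanSpace ℝ ι => p * ‖x‖ ^ (p - 2)) =
      (fun x : EuclideanSpace ℝ ι =>
        p * ((fun t : ℝ => t ^ ((p-2)/2)) ∘ (fun x : EuclideanSpace ℝ ι => ‖x‖ ^ 2)) x) := by
    funext x; simp [Function.comp, pow_half_eq (p-2) x]
  rw [heq]
  refine h3.congr_fderiv ?_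
  have h4 : ((‖w‖:ℝ) ^ 2) ^ ((p-2) / 2 - 1) = ‖w‖ ^ (p - 4) := by
    rw [← Real.rpow_natCast ‖w‖ 2, ← Real.rpow_mul (norm_nonneg w)]
    congr 1; push_cast; ring
  rw [h4]
  ext v
  have : inSL (ι := ι) w v = (innerSL ℝ w) v := rfl
  simp [smul_smul, this]
  ring

lemma hasFDerivAt_g (p : ℝ) {w : EuclideanSpace ℝ ι} (hw : w ≠ 0) :
    HasFDerivAt (fun x : EuclideanSpace ℝ ι => (p * ‖x‖ ^ (p - 2)) • (inSL (ι := ι) x))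
      ((p * ‖w‖ ^ (p - 2)) • (inSL (ι := ι)) +
        ((p * (p - 2) * ‖w‖ ^ (p - 4)) • (inSL (ι := ι) w)).smulRight
          (inSL (ι := ι) w)) w :=
  (hasFDerivAt_c p hw).smul ((inSL (ι := ι)).hasFDerivAt)

end Stmt12Aux

open Stmt12Aux in
lemma hessE_norm_rpow {ι : Type*} [Fintype ι] [DecidableEq ι]
    (p : ℝ) (hp : 1 < p) {ω : EuclideanSpace ℝ ι} (hω : ω ≠ 0) (i j : ι) :
    hessE (fun w : EuclideanSpace ℝ ι => ‖w‖ ^ p) ω i j =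
      p * (p - 2) * ‖ω‖ ^ (p - 4) * (ω i * ω j) +
        (if i = j then p * ‖ω‖ ^ (p - 2) else 0) := by
  rw [hessE, iteratedFDeriv_two_apply]
  have hfd : fderiv ℝ (fun w : EuclideanSpace ℝ ι => ‖w‖ ^ p) =
      fun x : EuclideanSpace ℝ ι => (p * ‖x‖ ^ (p - 2)) • (inSL (ι := ι) x) := by
    funext x; exact fderiv_norm_rpow x hp
  rw [hfd, (hasFDerivAt_g p hω).fderiv]
  simp only [Matrix.cons_val_zero, Matrix.cons_val_one, Matrix.head_cons,
    ContinuousLinearMap.add_apply, ContinuousLinearMap.smul_apply,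
    ContinuousLinearMap.smulRight_apply, inSL_apply, EuclideanSpace.single_apply,
    smul_eq_mul]
  simp only [mul_ite, mul_one, mul_zero, Finset.sum_ite_eq' Finset.univ,
    Finset.mem_univ, if_true]
  by_cases h : i = j
  · simp [h]; ring
  · simp [h, Ne.symm h]; ring

lemma realForm_smul_one {d : ℕ} (r : ℝ) (x y : Fin 2 × Fin d) :
    realForm ((r : ℂ) • (1 : Matrix (Fin d) (Fin d) ℂ)).conjTranspose x y =
      if x = y then r else 0 := by
  obtain ⟨xa, xm⟩ := x
  obtain ⟨ya, ym⟩ := y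
  fin_cases xa <;> fin_cases ya <;>
    simp [realForm, Matrix.conjTranspose_apply, Matrix.smul_apply, Matrix.one_apply,
      Prod.ext_iff, apply_ite, eq_comm] <;>
    split <;> simp_all

lemma genHess_eq {d : ℕ} (a b : ℝ) (Φ : EuclideanSpace ℝ (Fin 2 × Fin 2) → ℝ)
    (ω : EuclideanSpace ℝ (Fin 2 × Fin 2)) (X : Fin 2 × Fin 2 × Fin d → ℝ) :
    genHess ![(a : ℂ) • (1 : Matrix (Fin d) (Fin d) ℂ),
        (b : ℂ) • (1 : Matrix (Fin d) (Fin d) ℂ)] Φ ω X =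
      ∑ m, ∑ j, ∑ α, (![a, b] j) *
        (∑ k, ∑ β, hessE Φ ω (j, α) (k, β) * X (k, β, m)) * X (j, α, m) := by
  rw [genHess]
  have key : ∀ (j : Fin 2) (α : Fin 2) (m : Fin d),
      (∑ bi : Fin 2, ∑ n : Fin d, realForm ((![(a : ℂ) • (1 : Matrix (Fin d) (Fin d) ℂ),
          (b : ℂ) • (1 : Matrix (Fin d) (Fin d) ℂ)] j).conjTranspose) (α, m) (bi, n) *
        (∑ k, ∑ c, hessE Φ ω (j, bi) (k, c) * X (k, c, n))) =
      (![a, b] j) * (∑ k, ∑ β, hessE Φ ω (j, α) (k, β) * X (k, β, m)) := by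
    intro j α m
    have hrf : ∀ x y : Fin 2 × Fin d, realForm ((![(a : ℂ) • (1 : Matrix (Fin d) (Fin d) ℂ),
        (b : ℂ) • (1 : Matrix (Fin d) (Fin d) ℂ)] j).conjTranspose) x y =
        if x = y then ![a, b] j else 0 := by
      intro x y
      fin_cases j
      · simp only [Fin.mk_zero, Matrix.cons_val_zero]; exact realForm_smul_one a x y
      · simp only [Fin.mk_one, Matrix.cons_val_one, Matrix.head_cons]
        exact realForm_smul_one b x y
    simp only [hrf, ite_mul, zero_mul, Prod.mk.injEq, ite_and]
    simp
  simp only [key]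
  rw [show (∑ j : Fin 2, ∑ α : Fin 2, ∑ m : Fin d, (![a, b] j) *
        (∑ k, ∑ β, hessE Φ ω (j, α) (k, β) * X (k, β, m)) * X (j, α, m)) =
      ∑ j : Fin 2, ∑ m : Fin d, ∑ α : Fin 2, (![a, b] j) *
        (∑ k, ∑ β, hessE Φ ω (j, α) (k, β) * X (k, β, m)) * X (j, α, m) from
    Finset.sum_congr rfl fun j _ => Finset.sum_comm, Finset.sum_comm]

lemma quad_nonneg' (A B C α β : ℝ) (hA : 0 ≤ A) (hB : 0 ≤ B) (h : C^2 ≤ 4*A*B) :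
    0 ≤ A*α^2 + B*β^2 + C*α*β := by
  rcases eq_or_lt_of_le hA with hA0 | hA0
  · have hC : C = 0 := by nlinarith
    subst hC
    nlinarith [mul_nonneg hA (sq_nonneg α), mul_nonneg hB (sq_nonneg β)]
  · nlinarith [sq_nonneg (2*A*α + C*β), sq_nonneg β, mul_nonneg hA hB]

lemma core_ineq (a b t P R X Z α β : ℝ) (ha : 0 < a) (hb : 0 < b) (ht : -1 < t)
    (hcond : t^2*(a+b)^2 ≤ 4*a*b*(t+2)^2)
    (hP : 0 ≤ P) (hR : 0 ≤ R) (hX : 0 ≤ X) (hZ : 0 ≤ Z)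
    (hα : α^2 ≤ P*X) (hβ : β^2 ≤ R*Z) :
    0 ≤ (P+R)*(a*X+b*Z) + t*(α+β)*(a*α+b*β) := by
  have h1t : (0:ℝ) < 1 + t := by linarith
  have hcond' : t^2*(a-b)^2 ≤ 16*a*b*(1+t) := by nlinarith
  rcases eq_or_lt_of_le hP with hP0 | hP0
  · have hα0 : α = 0 := by nlinarith
    subst hα0
    have key : 0 ≤ R*Z + t*β^2 := by
      rcases le_or_gt 0 t with htp | htn
      · nlinarith [mul_nonneg htp (sq_nonneg β), mul_nonneg hR hZ]
      · nlinarith [mul_nonneg (neg_pos.2 htn).le (sub_nonneg.2 hβ), mul_nonneg hR hZ,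
          mul_nonneg h1t.le (mul_nonneg hR hZ)]
    nlinarith [mul_nonneg hb.le key, mul_nonneg hR (mul_nonneg ha.le hX),
      mul_nonneg hP (mul_nonneg ha.le hX), mul_nonneg hP (mul_nonneg hb.le hZ)]
  rcases eq_or_lt_of_le hR with hR0 | hR0
  · have hβ0 : β = 0 := by nlinarith
    subst hβ0
    have key : 0 ≤ P*X + t*α^2 := by
      rcases le_or_gt 0 t with htp | htn
      · nlinarith [mul_nonneg htp (sq_nonneg α), mul_nonneg hP hX]
      · nlinarith [mul_nonneg (neg_pos.2 htn).le (sub_nonneg.2 hα), mul_nonneg hP hX,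
          mul_nonneg h1t.le (mul_nonneg hP hX)]
    nlinarith [mul_nonneg ha.le key, mul_nonneg hP (mul_nonneg hb.le hZ),
      mul_nonneg hR (mul_nonneg ha.le hX), mul_nonneg hR (mul_nonneg hb.le hZ)]
  have haux1 : (0:ℝ) ≤ P+R+t*P := by nlinarith [mul_nonneg h1t.le hP]
  have haux2 : (0:ℝ) ≤ P+R+t*R := by nlinarith [mul_nonneg h1t.le hR]
  have hA : 0 ≤ a*R*(P+R+t*P) := mul_nonneg (mul_nonneg ha.le hR) haux1
  have hB : 0 ≤ b*P*(P+R+t*R) := mul_nonneg (mul_nonneg hb.le hP) haux2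
  have hid : 4*(a*R*(P+R+t*P))*(b*P*(P+R+t*R)) - (t*(a+b)*P*R)^2 =
      (1+t)*((P+R)^2 - 4*P*R)*(4*a*b)*(P*R) + (16*a*b*(1+t) - t^2*(a-b)^2)*(P*R)^2 := by
    ring
  have h3 : (t*(a+b)*P*R)^2 ≤ 4*(a*R*(P+R+t*P))*(b*P*(P+R+t*R)) := by
    have e1 : 0 ≤ (1+t)*((P+R)^2 - 4*P*R)*(4*a*b)*(P*R) := by
      have h7 : (0:ℝ) ≤ (P+R)^2 - 4*P*R := by nlinarith [sq_nonneg (P-R)]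
      have h4ab : (0:ℝ) ≤ 4*a*b := by positivity
      exact mul_nonneg (mul_nonneg (mul_nonneg h1t.le h7) h4ab) (mul_pos hP0 hR0).le
    have e2 : 0 ≤ (16*a*b*(1+t) - t^2*(a-b)^2)*(P*R)^2 :=
      mul_nonneg (by linarith) (sq_nonneg _)
    linarith [hid, e1, e2]
  have h4 := quad_nonneg' _ _ _ α β hA hB h3
  have h5 : 0 ≤ P*R*((P+R)*(a*X+b*Z) + t*(α+β)*(a*α+b*β)) := by
    nlinarith [h4, mul_nonneg (mul_nonneg ha.le hR) (sub_nonneg.2 hα),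
      mul_nonneg (mul_nonneg hb.le hP) (sub_nonneg.2 hβ),
      mul_nonneg (mul_nonneg (mul_nonneg ha.le hR) (sub_nonneg.2 hα)) hP,
      mul_nonneg (mul_nonneg (mul_nonneg hb.le hP) (sub_nonneg.2 hβ)) hR,
      mul_nonneg (mul_nonneg (mul_nonneg ha.le hR) (sub_nonneg.2 hα)) hR,
      mul_nonneg (mul_nonneg (mul_nonneg hb.le hP) (sub_nonneg.2 hβ)) hP]
  nlinarith [h5, mul_pos hP0 hR0]

lemma cond_iff' (a b p : ℝ) (ha : 0 < a) (hb : 0 < b) (hp : 1 < p) :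
    (|1 - 2 / p| ≤ 2 * Real.sqrt (a * b) / (a + b)) ↔
      (p-2)^2*(a+b)^2 ≤ 4*a*b*p^2 := by
  have hp0 : 0 < p := by linarith
  have hab : 0 < a + b := by linarith
  have h1 : |1 - 2/p| = |p - 2| / p := by
    rw [show (1 - 2/p) = (p-2)/p by field_simp, abs_div, abs_of_pos hp0]
  rw [h1, div_le_div_iff₀ hp0 hab]
  constructor
  · intro h
    have h2 := pow_le_pow_left₀ (by positivity) h 2
    rw [mul_pow, mul_pow, sq_abs, mul_pow, Real.sq_sqrt (by positivity : (0:ℝ) ≤ a*b)] at h2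
    nlinarith
  · intro h
    have h4 : Real.sqrt ((p-2)^2*(a+b)^2) = |p - 2| * (a+b) := by
      rw [show (p-2)^2*(a+b)^2 = ((p-2)*(a+b))^2 by ring, Real.sqrt_sq_eq_abs, abs_mul,
        abs_of_pos hab]
    have h5 : Real.sqrt (4*a*b*p^2) = 2*Real.sqrt (a*b)*p := by
      rw [show 4*a*b*p^2 = (2*Real.sqrt (a*b)*p)^2 by
        rw [mul_pow, mul_pow, Real.sq_sqrt (by positivity : (0:ℝ) ≤ a*b)]; ring]
      exact Real.sqrt_sq (by positivity)
    have h6 := Real.sqrt_le_sqrt h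
    rw [h4, h5] at h6
    linarith

lemma norm_sq_coords (ω : EuclideanSpace ℝ (Fin 2 × Fin 2)) :
    ‖ω‖^2 = ω (0,0)^2 + ω (0,1)^2 + ω (1,0)^2 + ω (1,1)^2 := by
  rw [EuclideanSpace.norm_eq, Real.sq_sqrt (Finset.sum_nonneg fun i _ => by positivity)]
  rw [Fintype.sum_prod_type]
  simp [Fin.sum_univ_two, Real.norm_eq_abs, sq_abs]
  ring

end Aux

/-- for `A = aI`, `B = bI` with `a,b > 0`, the power function `F_p(ω)=|ω|^p`
on `ℝ⁴` is `(A,B)`-convex in `ℝ⁴∖{0}` iff `|1 − 2/p| ≤ 2√(ab)/(a+b)`. -/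
theorem stmt12 {d : ℕ} (hd : 0 < d) (a b : ℝ) (ha : 0 < a) (hb : 0 < b) (p : ℝ) (hp : 1 < p) :
    (∀ ω : EuclideanSpace ℝ (Fin 2 × Fin 2), ω ≠ 0 → ∀ X : Fin 2 × Fin 2 × Fin d → ℝ,
        0 ≤ genHess ![(a : ℂ) • (1 : Matrix (Fin d) (Fin d) ℂ),
            (b : ℂ) • (1 : Matrix (Fin d) (Fin d) ℂ)] (fun w => ‖w‖ ^ p) ω X) ↔
      |1 - 2 / p| ≤ 2 * Real.sqrt (a * b) / (a + b) := by
  have hp0 : (0:ℝ) < p := by linarith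
  rw [cond_iff' a b p ha hb hp]
  constructor
  · -- forward direction
    intro H
    set ω0 : EuclideanSpace ℝ (Fin 2 × Fin 2) := WithLp.toLp 2 (fun x : Fin 2 × Fin 2 => if x.2 = 0 then 1 else 0) with hω0def
    have hcoord : ∀ j α : Fin 2, ω0 (j, α) = if α = 0 then 1 else 0 := fun _ _ => rfl
    have hω0 : ω0 ≠ 0 := by
      intro h
      have h2 : ω0 (0,0) = 0 := by rw [h]; rfl
      rw [hcoord] at h2; simp at h2
    have hr2 : ‖ω0‖^2 = 2 := by
      rw [norm_sq_coords]
      simp [hcoord]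
      norm_num
    have hrpos : (0:ℝ) < ‖ω0‖ := norm_pos_iff.2 hω0
    have hspos : (0:ℝ) < ‖ω0‖ ^ (p-4) := Real.rpow_pos_of_pos hrpos _
    have hrrel : ‖ω0‖ ^ (p-2) = ‖ω0‖ ^ (p-4) * 2 := by
      have h2 : ‖ω0‖ ^ (2:ℝ) = ‖ω0‖^2 := by
        rw [← Real.rpow_natCast ‖ω0‖ 2]; norm_num
      rw [show p-2 = (p-4)+2 by ring, Real.rpow_add hrpos, h2, hr2]
    have hq : ∀ x y : ℝ, 0 ≤ a*p*x^2 + b*p*y^2 + (p-2)*(a+b)*(x*y) := by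
      intro x y
      set m0 : Fin d := ⟨0, hd⟩ with hm0
      set Y : Fin 2 → Fin 2 → ℝ :=
        fun k c => if c = 0 then (if k = 0 then x else y) else 0 with hY
      have hq0 := H ω0 hω0 (fun q => if q.2.2 = m0 then Y q.1 q.2.1 else 0)
      rw [genHess_eq] at hq0
      simp only [] at hq0
      have hsel : ∀ m : Fin d,
          (∑ j, ∑ α, (![a, b] j) *
            (∑ k, ∑ β, hessE (fun w : EuclideanSpace ℝ (Fin 2 × Fin 2) => ‖w‖ ^ p) ω0
              (j, α) (k, β) * (if m = m0 then Y k β else 0)) *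
            (if m = m0 then Y j α else 0)) =
          (if m = m0 then (∑ j, ∑ α, (![a, b] j) *
            (∑ k, ∑ β, hessE (fun w : EuclideanSpace ℝ (Fin 2 × Fin 2) => ‖w‖ ^ p) ω0
              (j, α) (k, β) * Y k β) * Y j α) else 0) := by
        intro m
        by_cases hmm : m = m0 <;> simp [hmm]
      rw [Finset.sum_congr rfl fun m _ => hsel m, Finset.sum_ite_eq' Finset.univ m0] at hq0
      simp only [Finset.mem_univ, if_true, Fin.sum_univ_two,
        hessE_norm_rpow p hp hω0, hcoord, hY, Matrix.cons_val_zero, Matrix.cons_val_one,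
        Matrix.head_cons, Prod.mk.injEq] at hq0
      norm_num at hq0
      rw [hrrel] at hq0
      nlinarith [hq0, mul_pos hp0 hspos]
    nlinarith [hq (-((p-2)*(a+b))) (2*a*p), mul_pos ha hp0]
  · -- backward direction
    intro hcond ω hω X
    rw [genHess_eq]
    apply Finset.sum_nonneg
    intro m _
    have hrpos : (0:ℝ) < ‖ω‖ := norm_pos_iff.2 hω
    have hspos : (0:ℝ) < ‖ω‖ ^ (p-4) := Real.rpow_pos_of_pos hrpos _
    have hrrel : ‖ω‖ ^ (p-2) = ‖ω‖ ^ (p-4) * ‖ω‖^2 := by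
      have h2 : ‖ω‖ ^ (2:ℝ) = ‖ω‖^2 := by
        rw [← Real.rpow_natCast ‖ω‖ 2]; norm_num
      rw [show p-2 = (p-4)+2 by ring, Real.rpow_add hrpos, h2]
    simp only [Fin.sum_univ_two, hessE_norm_rpow p hp hω, Matrix.cons_val_zero,
      Matrix.cons_val_one, Matrix.head_cons, Prod.mk.injEq]
    norm_num
    rw [hrrel, norm_sq_coords]
    have hcore := core_ineq a b (p-2) (ω (0,0)^2 + ω (0,1)^2) (ω (1,0)^2 + ω (1,1)^2)
        (X (0,0,m)^2 + X (0,1,m)^2) (X (1,0,m)^2 + X (1,1,m)^2)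
        (ω (0,0)*X (0,0,m) + ω (0,1)*X (0,1,m)) (ω (1,0)*X (1,0,m) + ω (1,1)*X (1,1,m))
        ha hb (by linarith) (by nlinarith [hcond]) (by positivity) (by positivity)
        (by positivity) (by positivity)
        (by nlinarith [sq_nonneg (ω (0,0)*X (0,1,m) - ω (0,1)*X (0,0,m))])
        (by nlinarith [sq_nonneg (ω (1,0)*X (1,1,m) - ω (1,1)*X (1,0,m))])
    nlinarith [mul_nonneg (mul_nonneg hp0.le hspos.le) hcore]
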